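/- arXiv:2507.17036 — 3 statements merged into one kernel-verified Lean document; each statement's English description precedes it below -/
import Mathlib

section
/- Let N, m be positive integers, let A ∈ ℂ^{N×N} be a matrix of rank r, and let ε ∈ (0,1). Suppose M₁ ∈ ℂ^{m×N} is an ε-JL map of the column space of A and M₂ ∈ ℂ^{m×N} is an ε-JL map of the column space of A*. Then for every j ∈ {1,…,N}, |σ_j(M₁ A M₂*) − σ_j(A)| ≤ ε(2+ε)·σ_j(A). -/
open scoped Matrix

/-- The squared Euclidean (ℓ²) norm of a vector in `ℂ^n`. -/
noncomputable def nsq {n : ℕ} (x : Fin n → ℂ) : ℝ := ∑ i, ‖x i‖ ^ 2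

/-- `M` is an `ε`-JL map of the set `S ⊆ ℂ^N`:
`(1-ε)‖x‖₂² ≤ ‖Mx‖₂² ≤ (1+ε)‖x‖₂²` for all `x ∈ S`. -/
def IsJLMap {m N : ℕ} (M : Matrix (Fin m) (Fin N) ℂ) (ε : ℝ) (S : Set (Fin N → ℂ)) : Prop :=
  ∀ x ∈ S, (1 - ε) * nsq x ≤ nsq (M.mulVec x) ∧ nsq (M.mulVec x) ≤ (1 + ε) * nsq x

/-- The `j`-th largest singular value of a square matrix (`j` is 0-indexed, so `sval B 0`
is the largest singular value); it is `0` if `j ≥ d`.  It is defined as the square root of the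
`j`-th largest eigenvalue of `Bᴴ * B`. -/
noncomputable def sval {d : ℕ} (B : Matrix (Fin d) (Fin d) ℂ) (j : ℕ) : ℝ :=
  if h : j < d then
    Real.sqrt (((Matrix.isHermitian_conjTranspose_mul_self B)).eigenvalues
      (Tuple.sort ((Matrix.isHermitian_conjTranspose_mul_self B)).eigenvalues (Fin.rev ⟨j, h⟩)))
  else 0

section AuxJL
open Matrix

namespace JL
variable {n m : ℕ}

lemma conj_mul_re (c : ℝ) (z : ℂ) : (star z * ((c:ℂ) * z)).re = c * ‖z‖^2 := by
  have h1 : star z * ((c:ℂ) * z) = (c:ℂ) * ((Complex.normSq z : ℂ)) := by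
    rw [Complex.star_def, Complex.normSq_eq_conj_mul_self]; ring
  have h2 : Complex.normSq z = ‖z‖^2 := by
    rw [← Complex.sq_norm]
  rw [h1, ← Complex.ofReal_mul, Complex.ofReal_re, h2]

noncomputable def quad (H : Matrix (Fin n) (Fin n) ℂ) (x : Fin n → ℂ) : ℝ :=
  (star x ⬝ᵥ H *ᵥ x).re

lemma nsq_nonneg (x : Fin n → ℂ) : 0 ≤ nsq x :=
  Finset.sum_nonneg fun i _ => sq_nonneg _

lemma nsq_eq_zero_iff {x : Fin n → ℂ} : nsq x = 0 ↔ x = 0 := by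
  constructor
  · intro h
    funext i
    have := (Finset.sum_eq_zero_iff_of_nonneg (fun i _ => sq_nonneg ‖x i‖)).mp h i (Finset.mem_univ i)
    simpa using this
  · intro h; simp [h, nsq]

lemma dot_star_self_re (x : Fin n → ℂ) : (star x ⬝ᵥ x).re = nsq x := by
  simp only [dotProduct, Pi.star_apply, Complex.re_sum, nsq]
  refine Finset.sum_congr rfl fun i _ => ?_
  have := conj_mul_re 1 (x i)
  rw [Complex.ofReal_one, one_mul] at this
  rw [this, one_mul]

lemma quad_conjTranspose_mul_self (B : Matrix (Fin m) (Fin n) ℂ) (x : Fin n → ℂ) :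
    quad (Bᴴ * B) x = nsq (B *ᵥ x) := by
  unfold quad
  rw [← mulVec_mulVec, dotProduct_mulVec, ← star_mulVec, dot_star_self_re]

lemma quad_eq_sum {H : Matrix (Fin n) (Fin n) ℂ} (hH : H.IsHermitian) (x : Fin n → ℂ) :
    quad H x = ∑ i, hH.eigenvalues i *
      ‖((star (hH.eigenvectorUnitary : Matrix (Fin n) (Fin n) ℂ)) *ᵥ x) i‖ ^ 2 := by
  unfold quad
  conv_lhs => rw [hH.spectral_theorem, Unitary.conjStarAlgAut_apply]
  set U := (hH.eigenvectorUnitary : Matrix (Fin n) (Fin n) ℂ) with hU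
  set y := (star U) *ᵥ x with hy
  have h1 : star x ⬝ᵥ (U * diagonal (RCLike.ofReal ∘ hH.eigenvalues) * star U) *ᵥ x
      = star y ⬝ᵥ (diagonal (RCLike.ofReal ∘ hH.eigenvalues)) *ᵥ y := by
    rw [← mulVec_mulVec, ← mulVec_mulVec, dotProduct_mulVec]
    congr 1
    rw [hy, star_mulVec]
    simp [star_eq_conjTranspose]
  rw [h1]
  simp only [dotProduct, mulVec_diagonal, Pi.star_apply, Complex.re_sum, Function.comp_apply]
  exact Finset.sum_congr rfl fun i _ => conj_mul_re _ _

lemma nsq_eq_sum {H : Matrix (Fin n) (Fin n) ℂ} (hH : H.IsHermitian) (x : Fin n → ℂ) :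
    nsq x = ∑ i, ‖((star (hH.eigenvectorUnitary : Matrix (Fin n) (Fin n) ℂ)) *ᵥ x) i‖ ^ 2 := by
  set U := (hH.eigenvectorUnitary : Matrix (Fin n) (Fin n) ℂ) with hU
  set y := (star U) *ᵥ x with hy
  have hUU : (star U)ᴴ * star U = 1 := by
    have := (Matrix.mem_unitaryGroup_iff).mp hH.eigenvectorUnitary.2
    simpa [star_eq_conjTranspose] using this
  have h1 : star y ⬝ᵥ y = star x ⬝ᵥ x := by
    rw [hy, star_mulVec, ← dotProduct_mulVec, mulVec_mulVec, hUU, one_mulVec]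
  have := dot_star_self_re y
  rw [h1, dot_star_self_re] at this
  rw [this]
  rfl

variable {n m : ℕ}

/-- Vectors supported on `S`. -/
noncomputable def coordSub (S : Finset (Fin n)) : Submodule ℂ (Fin n → ℂ) where
  carrier := {x | ∀ i ∉ S, x i = 0}
  add_mem' := by intro a b ha hb i hi; simp only [Pi.add_apply, ha i hi, hb i hi, add_zero]
  zero_mem' := by intro i hi; rfl
  smul_mem' := by intro c a ha i hi; simp only [Pi.smul_apply, ha i hi, smul_zero]

noncomputable def coordEquiv (S : Finset (Fin n)) : coordSub S ≃ₗ[ℂ] (↥S → ℂ) where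
  toFun x i := x.1 i.1
  map_add' x y := rfl
  map_smul' c x := rfl
  invFun g := ⟨fun i => if h : i ∈ S then g ⟨i, h⟩ else 0, fun i hi => dif_neg hi⟩
  left_inv x := by
    ext i
    by_cases h : i ∈ S
    · simp [h]
    · simp [h, x.2 i h]
  right_inv g := by ext i; simp [i.2]

lemma finrank_coordSub (S : Finset (Fin n)) :
    Module.finrank ℂ (coordSub S) = S.card := by
  rw [(coordEquiv S).finrank_eq, Module.finrank_pi, Fintype.card_coe]

lemma finrank_pi_fin : Module.finrank ℂ (Fin n → ℂ) = n := Module.finrank_fin_fun ℂ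

/-- Intersection of big subspaces is nontrivial. -/
lemma exists_ne_zero_mem_inf {V W : Submodule ℂ (Fin n → ℂ)}
    (h : n < Module.finrank ℂ V + Module.finrank ℂ W) :
    ∃ x, x ∈ V ∧ x ∈ W ∧ x ≠ 0 := by
  have hsup : Module.finrank ℂ ↥(V ⊔ W) ≤ n := by
    have h1 := Submodule.finrank_le (V ⊔ W)
    have h2 : Module.finrank ℂ (Fin n → ℂ) = n := finrank_pi_fin
    omega
  have heq := Submodule.finrank_sup_add_finrank_inf_eq V W
  have hpos : 0 < Module.finrank ℂ ↥(V ⊓ W) := by omega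
  have hbot : V ⊓ W ≠ ⊥ := by
    intro hb
    rw [hb] at hpos
    simp at hpos
  obtain ⟨x, hx, hx0⟩ := Submodule.exists_mem_ne_zero_of_ne_bot hbot
  exact ⟨x, hx.1, hx.2, hx0⟩

end JL

namespace JL2
open JL
variable {n m : ℕ} {H : Matrix (Fin n) (Fin n) ℂ}

/-- sorted (descending) eigenvalues -/
noncomputable def sortedEig (hH : H.IsHermitian) (j : Fin n) : ℝ :=
  hH.eigenvalues (Tuple.sort hH.eigenvalues (Fin.rev j))

lemma sortedEig_congr {K : Matrix (Fin n) (Fin n) ℂ} (h : H = K) (hH : H.IsHermitian)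
    (hK : K.IsHermitian) (j : Fin n) : sortedEig hH j = sortedEig hK j := by
  subst h; rfl

noncomputable def Vsub (hH : H.IsHermitian) (S : Finset (Fin n)) : Submodule ℂ (Fin n → ℂ) :=
  Submodule.comap
    (mulVecLin (star (hH.eigenvectorUnitary : Matrix (Fin n) (Fin n) ℂ)))
    (coordSub S)

lemma mem_Vsub_iff (hH : H.IsHermitian) (S : Finset (Fin n)) (x : Fin n → ℂ) :
    x ∈ Vsub hH S ↔ ∀ i ∉ S,
      ((star (hH.eigenvectorUnitary : Matrix (Fin n) (Fin n) ℂ)) *ᵥ x) i = 0 := Iff.rfl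

noncomputable def unitaryEquiv (hH : H.IsHermitian) : (Fin n → ℂ) ≃ₗ[ℂ] (Fin n → ℂ) :=
  LinearEquiv.ofLinear
    (mulVecLin (star (hH.eigenvectorUnitary : Matrix (Fin n) (Fin n) ℂ)))
    (mulVecLin (hH.eigenvectorUnitary : Matrix (Fin n) (Fin n) ℂ))
    (by rw [← mulVecLin_mul, Unitary.coe_star_mul_self, mulVecLin_one])
    (by rw [← mulVecLin_mul, (Matrix.mem_unitaryGroup_iff).mp hH.eigenvectorUnitary.2, mulVecLin_one])

lemma finrank_Vsub (hH : H.IsHermitian) (S : Finset (Fin n)) :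
    Module.finrank ℂ (Vsub hH S) = S.card := by
  have h1 : Vsub hH S = Submodule.comap (unitaryEquiv hH : (Fin n → ℂ) →ₗ[ℂ] (Fin n → ℂ))
      (coordSub S) := rfl
  rw [h1, Submodule.comap_equiv_eq_map_symm, LinearEquiv.finrank_map_eq, finrank_coordSub]

end JL2


namespace JL2
open JL
variable {n m : ℕ} {H : Matrix (Fin n) (Fin n) ℂ}

lemma starU_mulVec (hH : H.IsHermitian) (x : Fin n → ℂ) :
    (star (hH.eigenvectorUnitary : Matrix (Fin n) (Fin n) ℂ)) *ᵥ (H *ᵥ x)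
      = fun i => (hH.eigenvalues i : ℂ) *
        ((star (hH.eigenvectorUnitary : Matrix (Fin n) (Fin n) ℂ)) *ᵥ x) i := by
  set U := (hH.eigenvectorUnitary : Matrix (Fin n) (Fin n) ℂ) with hU
  have h1 : star U * H = diagonal (RCLike.ofReal ∘ hH.eigenvalues) * star U := by
    conv_lhs => rw [hH.spectral_theorem, Unitary.conjStarAlgAut_apply]
    rw [← Matrix.mul_assoc, ← Matrix.mul_assoc]
    rw [show star U * U = 1 by
      simpa [hU] using Unitary.coe_star_mul_self hH.eigenvectorUnitary, Matrix.one_mul]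
  rw [mulVec_mulVec, h1, ← mulVec_mulVec]
  funext i
  simp [mulVec_diagonal]

lemma nsq_H_mulVec (hH : H.IsHermitian) (x : Fin n → ℂ) :
    nsq (H *ᵥ x) = ∑ i, (hH.eigenvalues i)^2 *
      ‖((star (hH.eigenvectorUnitary : Matrix (Fin n) (Fin n) ℂ)) *ᵥ x) i‖ ^ 2 := by
  rw [nsq_eq_sum hH (H *ᵥ x), starU_mulVec hH x]
  refine Finset.sum_congr rfl fun i _ => ?_
  rw [norm_mul, mul_pow, Complex.norm_real, Real.norm_eq_abs, sq_abs]

lemma exists_upper_witness (hH : H.IsHermitian) (j : Fin n) :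
    ∃ W : Submodule ℂ (Fin n → ℂ), Module.finrank ℂ W = n - (j:ℕ) ∧
      ∀ x ∈ W, quad H x ≤ sortedEig hH j * nsq x := by
  set σ := Tuple.sort hH.eigenvalues with hσ
  refine ⟨Vsub hH (Finset.image σ (Finset.Iic (Fin.rev j))), ?_, ?_⟩
  · rw [finrank_Vsub, Finset.card_image_of_injective _ σ.injective, Fin.card_Iic]
    have h1 := j.isLt
    have h2 : (Fin.rev j : ℕ) = n - (j + 1) := Fin.val_rev j
    omega
  · intro x hx
    rw [quad_eq_sum hH, nsq_eq_sum hH x, Finset.mul_sum]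
    apply Finset.sum_le_sum
    intro i _
    by_cases hy : ((star (hH.eigenvectorUnitary : Matrix (Fin n) (Fin n) ℂ)) *ᵥ x) i = 0
    · simp [hy]
    · have hiS : i ∈ Finset.image σ (Finset.Iic (Fin.rev j)) := by
        by_contra h
        exact hy ((mem_Vsub_iff hH _ x).mp hx i h)
      obtain ⟨k, hk, rfl⟩ := Finset.mem_image.mp hiS
      have hmono : hH.eigenvalues (σ k) ≤ hH.eigenvalues (σ (Fin.rev j)) :=
        Tuple.monotone_sort hH.eigenvalues (Finset.mem_Iic.mp hk)
      exact mul_le_mul_of_nonneg_right hmono (sq_nonneg _)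

lemma exists_lower_witness (hH : H.IsHermitian) (j : Fin n) :
    ∃ V : Submodule ℂ (Fin n → ℂ), Module.finrank ℂ V = (j:ℕ) + 1 ∧
      (∀ x ∈ V, sortedEig hH j * nsq x ≤ quad H x) ∧
      (0 ≤ sortedEig hH j → ∀ x ∈ V, sortedEig hH j * quad H x ≤ nsq (H *ᵥ x)) := by
  set σ := Tuple.sort hH.eigenvalues with hσ
  refine ⟨Vsub hH (Finset.image σ (Finset.Ici (Fin.rev j))), ?_, ?_, ?_⟩
  · rw [finrank_Vsub, Finset.card_image_of_injective _ σ.injective, Fin.card_Ici]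
    have h1 := j.isLt
    have h2 : (Fin.rev j : ℕ) = n - (j + 1) := Fin.val_rev j
    omega
  · intro x hx
    rw [quad_eq_sum hH, nsq_eq_sum hH x, Finset.mul_sum]
    apply Finset.sum_le_sum
    intro i _
    by_cases hy : ((star (hH.eigenvectorUnitary : Matrix (Fin n) (Fin n) ℂ)) *ᵥ x) i = 0
    · simp [hy]
    · have hiS : i ∈ Finset.image σ (Finset.Ici (Fin.rev j)) := by
        by_contra h
        exact hy ((mem_Vsub_iff hH _ x).mp hx i h)
      obtain ⟨k, hk, rfl⟩ := Finset.mem_image.mp hiS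
      have hmono : hH.eigenvalues (σ (Fin.rev j)) ≤ hH.eigenvalues (σ k) :=
        Tuple.monotone_sort hH.eigenvalues (Finset.mem_Ici.mp hk)
      exact mul_le_mul_of_nonneg_right hmono (sq_nonneg _)
  · intro _hlam x hx
    rw [quad_eq_sum hH, nsq_H_mulVec hH, Finset.mul_sum]
    apply Finset.sum_le_sum
    intro i _
    by_cases hy : ((star (hH.eigenvectorUnitary : Matrix (Fin n) (Fin n) ℂ)) *ᵥ x) i = 0
    · simp [hy]
    · have hiS : i ∈ Finset.image σ (Finset.Ici (Fin.rev j)) := by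
        by_contra h
        exact hy ((mem_Vsub_iff hH _ x).mp hx i h)
      obtain ⟨k, hk, rfl⟩ := Finset.mem_image.mp hiS
      have hmono : hH.eigenvalues (σ (Fin.rev j)) ≤ hH.eigenvalues (σ k) :=
        Tuple.monotone_sort hH.eigenvalues (Finset.mem_Ici.mp hk)
      have h1 : sortedEig hH j * hH.eigenvalues (σ k) ≤ (hH.eigenvalues (σ k))^2 := by
        have : sortedEig hH j ≤ hH.eigenvalues (σ k) := hmono
        nlinarith
      calc sortedEig hH j * (hH.eigenvalues (σ k) *
            ‖((star (hH.eigenvectorUnitary : Matrix (Fin n) (Fin n) ℂ)) *ᵥ x) (σ k)‖ ^ 2)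
          = (sortedEig hH j * hH.eigenvalues (σ k)) *
            ‖((star (hH.eigenvectorUnitary : Matrix (Fin n) (Fin n) ℂ)) *ᵥ x) (σ k)‖ ^ 2 := by
            ring
        _ ≤ _ := mul_le_mul_of_nonneg_right h1 (sq_nonneg _)

lemma le_sortedEig (hH : H.IsHermitian) (j : Fin n) {a : ℝ} (V : Submodule ℂ (Fin n → ℂ))
    (hd : (j:ℕ) + 1 ≤ Module.finrank ℂ V) (hb : ∀ x ∈ V, a * nsq x ≤ quad H x) :
    a ≤ sortedEig hH j := by
  obtain ⟨W, hWd, hWb⟩ := exists_upper_witness hH j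
  obtain ⟨x, hxV, hxW, hx0⟩ := exists_ne_zero_mem_inf (V := V) (W := W)
    (by have := j.isLt; omega)
  have h1 := hb x hxV
  have h2 := hWb x hxW
  have h3 : 0 < nsq x :=
    lt_of_le_of_ne (nsq_nonneg x) (fun h => hx0 (nsq_eq_zero_iff.mp h.symm))
  exact le_of_mul_le_mul_right (h1.trans h2) h3

lemma sortedEig_le (hH : H.IsHermitian) (j : Fin n) {b : ℝ} (W : Submodule ℂ (Fin n → ℂ))
    (hd : n - (j:ℕ) ≤ Module.finrank ℂ W) (hb : ∀ x ∈ W, quad H x ≤ b * nsq x) :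
    sortedEig hH j ≤ b := by
  obtain ⟨V, hVd, hVb, _⟩ := exists_lower_witness hH j
  obtain ⟨x, hxV, hxW, hx0⟩ := exists_ne_zero_mem_inf (V := V) (W := W)
    (by have := j.isLt; omega)
  have h1 := hVb x hxV
  have h2 := hb x hxW
  have h3 : 0 < nsq x :=
    lt_of_le_of_ne (nsq_nonneg x) (fun h => hx0 (nsq_eq_zero_iff.mp h.symm))
  exact le_of_mul_le_mul_right (h1.trans h2) h3

lemma sortedEig_nonneg (hH : H.IsHermitian) (hq : ∀ x, 0 ≤ quad H x) (j : Fin n) :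
    0 ≤ sortedEig hH j := by
  refine le_sortedEig hH j ⊤ ?_ (fun x _ => by simpa using hq x)
  rw [finrank_top, finrank_pi_fin]
  exact j.isLt

lemma sortedEig_le_mul {K : Matrix (Fin n) (Fin n) ℂ} (hH : H.IsHermitian) (hK : K.IsHermitian)
    {c : ℝ} (hc : 0 ≤ c) (hq : ∀ x, quad H x ≤ c * quad K x) (j : Fin n) :
    sortedEig hH j ≤ c * sortedEig hK j := by
  obtain ⟨W, hWd, hWb⟩ := exists_upper_witness hK j
  refine sortedEig_le hH j W hWd.ge (fun x hx => (hq x).trans ?_)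
  calc c * quad K x ≤ c * (sortedEig hK j * nsq x) :=
        mul_le_mul_of_nonneg_left (hWb x hx) hc
    _ = c * sortedEig hK j * nsq x := by ring

end JL2

namespace JL2
open JL

variable {n m : ℕ}

lemma quad_self_mul_conjTranspose_nonneg (D : Matrix (Fin n) (Fin m) ℂ) (y : Fin n → ℂ) :
    0 ≤ quad (D * Dᴴ) y := by
  rw [show D * Dᴴ = (Dᴴ)ᴴ * Dᴴ by rw [conjTranspose_conjTranspose],
    quad_conjTranspose_mul_self]
  exact nsq_nonneg _

lemma swap_le (D : Matrix (Fin n) (Fin m) ℂ) {j : ℕ} (hn : j < n) (hm : j < m) :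
    sortedEig (isHermitian_conjTranspose_mul_self D) ⟨j, hm⟩ ≤
      sortedEig (isHermitian_mul_conjTranspose_self D) ⟨j, hn⟩ := by
  set hH := isHermitian_conjTranspose_mul_self D with hhH
  have hq : ∀ x, 0 ≤ quad (Dᴴ * D) x := fun x => by
    rw [quad_conjTranspose_mul_self]; exact nsq_nonneg _
  have hlam0 : 0 ≤ sortedEig hH ⟨j, hm⟩ := sortedEig_nonneg hH hq _
  rcases eq_or_lt_of_le hlam0 with heq | hpos
  · rw [← heq]
    exact sortedEig_nonneg _ (quad_self_mul_conjTranspose_nonneg D) _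
  · obtain ⟨V, hVd, hV1, hV2⟩ := exists_lower_witness hH ⟨j, hm⟩
    have hV2' := hV2 hlam0
    set f := (mulVecLin D).comp V.subtype with hf
    have hinj : Function.Injective f := by
      rw [← LinearMap.ker_eq_bot]
      rw [Submodule.eq_bot_iff]
      rintro ⟨x, hx⟩ hker
      have hDx : D *ᵥ x = 0 := hker
      have h0 : quad (Dᴴ * D) x = 0 := by
        rw [quad_conjTranspose_mul_self, hDx]
        exact nsq_eq_zero_iff.mpr rfl
      have h1 := hV1 x hx
      rw [h0] at h1
      have h2 : nsq x ≤ 0 := by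
        by_contra hcon
        push_neg at hcon
        nlinarith
      have h3 : x = 0 := nsq_eq_zero_iff.mp (le_antisymm h2 (nsq_nonneg x))
      exact Subtype.ext h3
    have hrange : LinearMap.range f = Submodule.map (mulVecLin D) V := by
      rw [hf, LinearMap.range_comp, Submodule.range_subtype]
    have hdim : Module.finrank ℂ (Submodule.map (mulVecLin D) V) = j + 1 := by
      rw [← hrange, LinearMap.finrank_range_of_inj hinj, hVd]
    refine le_sortedEig (isHermitian_mul_conjTranspose_self D) ⟨j, hn⟩
      (Submodule.map (mulVecLin D) V) (le_of_eq hdim.symm) ?_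
    intro y hy
    obtain ⟨x, hx, rfl⟩ := Submodule.mem_map.mp hy
    rw [mulVecLin_apply]
    have e1 : nsq (D *ᵥ x) = quad (Dᴴ * D) x := (quad_conjTranspose_mul_self D x).symm
    have e2 : quad (D * Dᴴ) (D *ᵥ x) = nsq ((Dᴴ * D) *ᵥ x) := by
      rw [show D * Dᴴ = (Dᴴ)ᴴ * Dᴴ by rw [conjTranspose_conjTranspose],
        quad_conjTranspose_mul_self, mulVec_mulVec]
    calc sortedEig hH ⟨j, hm⟩ * nsq (D *ᵥ x)
        = sortedEig hH ⟨j, hm⟩ * quad (Dᴴ * D) x := by rw [e1]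
      _ ≤ nsq ((Dᴴ * D) *ᵥ x) := hV2' x hx
      _ = quad (D * Dᴴ) (D *ᵥ x) := e2.symm

lemma swap_eq (D : Matrix (Fin n) (Fin m) ℂ) {j : ℕ} (hn : j < n) (hm : j < m) :
    sortedEig (isHermitian_conjTranspose_mul_self D) ⟨j, hm⟩ =
      sortedEig (isHermitian_mul_conjTranspose_self D) ⟨j, hn⟩ := by
  refine le_antisymm (swap_le D hn hm) ?_
  have h := swap_le Dᴴ hm hn
  have e1 : sortedEig (isHermitian_conjTranspose_mul_self Dᴴ) ⟨j, hn⟩ =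
      sortedEig (isHermitian_mul_conjTranspose_self D) ⟨j, hn⟩ :=
    sortedEig_congr (by rw [conjTranspose_conjTranspose]) _ _ _
  have e2 : sortedEig (isHermitian_mul_conjTranspose_self Dᴴ) ⟨j, hm⟩ =
      sortedEig (isHermitian_conjTranspose_mul_self D) ⟨j, hm⟩ :=
    sortedEig_congr (by rw [conjTranspose_conjTranspose]) _ _ _
  rw [e1, e2] at h
  exact h

lemma sortedEig_eq_zero_of_rank_le {H : Matrix (Fin n) (Fin n) ℂ} (hH : H.IsHermitian)
    (hq : ∀ x, 0 ≤ quad H x) (j : Fin n) (hr : H.rank ≤ (j : ℕ)) :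
    sortedEig hH j = 0 := by
  refine le_antisymm ?_ (sortedEig_nonneg hH hq j)
  by_contra hcon
  push_neg at hcon
  set σ := Tuple.sort hH.eigenvalues with hσ
  have hsub : Finset.image σ (Finset.Ici (Fin.rev j)) ⊆
      Finset.univ.filter (fun i => hH.eigenvalues i ≠ 0) := by
    intro i hi
    obtain ⟨k, hk, rfl⟩ := Finset.mem_image.mp hi
    have h1 : sortedEig hH j ≤ hH.eigenvalues (σ k) :=
      Tuple.monotone_sort hH.eigenvalues (Finset.mem_Ici.mp hk)
    simp only [Finset.mem_filter, Finset.mem_univ, true_and]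
    intro h0
    rw [h0] at h1
    linarith
  have hcard1 : (Finset.image σ (Finset.Ici (Fin.rev j))).card = (j : ℕ) + 1 := by
    rw [Finset.card_image_of_injective _ σ.injective, Fin.card_Ici]
    have h1 := j.isLt
    have h2 : (Fin.rev j : ℕ) = n - ((j : ℕ) + 1) := Fin.val_rev j
    omega
  have hcard2 := Finset.card_le_card hsub
  have hcard3 : H.rank = (Finset.univ.filter (fun i => hH.eigenvalues i ≠ 0)).card := by
    rw [hH.rank_eq_card_non_zero_eigs, Fintype.card_subtype]
  omega

end JL2

namespace JL3
open JL JL2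

lemma rank_le_of_jl {N m : ℕ} (A : Matrix (Fin N) (Fin N) ℂ) (M₁ : Matrix (Fin m) (Fin N) ℂ)
    (ε : ℝ) (hε1 : ε < 1) (hM₁ : IsJLMap M₁ ε (Set.range A.mulVec)) : A.rank ≤ m := by
  have hd1 : (0:ℝ) < 1 - ε := by linarith
  set f := (mulVecLin M₁).comp (LinearMap.range (mulVecLin A)).subtype with hfdef
  have hinj : Function.Injective f := by
    rw [← LinearMap.ker_eq_bot, Submodule.eq_bot_iff]
    rintro ⟨v, hv⟩ hker
    have hv' : v ∈ Set.range A.mulVec := by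
      obtain ⟨y, hy⟩ := hv
      exact ⟨y, hy⟩
    have h0 : M₁ *ᵥ v = 0 := hker
    have h1 := (hM₁ v hv').1
    rw [h0, nsq_eq_zero_iff.mpr rfl] at h1
    have h2 : nsq v ≤ 0 := by nlinarith
    have h3 : v = 0 := nsq_eq_zero_iff.mp (le_antisymm h2 (nsq_nonneg v))
    exact Subtype.ext h3
  have hle := LinearMap.finrank_le_finrank_of_injective hinj
  rw [Module.finrank_fin_fun] at hle
  exact hle

lemma sval_eq {d : ℕ} (B : Matrix (Fin d) (Fin d) ℂ) {j : ℕ} (h : j < d) :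
    sval B j = Real.sqrt (sortedEig (Matrix.isHermitian_conjTranspose_mul_self B) ⟨j, h⟩) := by
  unfold sval
  rw [dif_pos h]
  rfl

lemma sval_eq_zero {d : ℕ} (B : Matrix (Fin d) (Fin d) ℂ) {j : ℕ} (h : ¬ j < d) :
    sval B j = 0 := by
  unfold sval
  rw [dif_neg h]

end JL3


end AuxJL

open Matrix JL JL2 JL3

/-- If `M₁` is an ε-JL map of the column space of `A` and `M₂` is an ε-JL map
of the column space of `A*`, then `|σ_j(M₁ A M₂*) − σ_j(A)| ≤ ε(2+ε)·σ_j(A)` for all `j`. -/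
theorem stmt_0 {N m : ℕ} (hN : 0 < N) (hm : 0 < m)
    (A : Matrix (Fin N) (Fin N) ℂ) (r : ℕ) (hrank : A.rank = r)
    (ε : ℝ) (hε0 : 0 < ε) (hε1 : ε < 1)
    (M₁ M₂ : Matrix (Fin m) (Fin N) ℂ)
    (hM₁ : IsJLMap M₁ ε (Set.range A.mulVec))
    (hM₂ : IsJLMap M₂ ε (Set.range (Aᴴ).mulVec)) :
    ∀ j : ℕ, j < N →
      |sval (M₁ * A * M₂ᴴ) j - sval A j| ≤ ε * (2 + ε) * sval A j := by
  intro j hjN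
  have hd1 : (0:ℝ) < 1 - ε := by linarith
  have hd2 : (0:ℝ) ≤ 1 + ε := by linarith
  set hAA := Matrix.isHermitian_conjTranspose_mul_self A with hAAdef
  have hqA : ∀ x, 0 ≤ quad (Aᴴ * A) x := fun x => by
    rw [quad_conjTranspose_mul_self]; exact nsq_nonneg _
  have hlamA0 : 0 ≤ sortedEig hAA ⟨j, hjN⟩ := sortedEig_nonneg hAA hqA _
  have hsvalA : sval A j = Real.sqrt (sortedEig hAA ⟨j, hjN⟩) := sval_eq A hjN
  have hsA0 : 0 ≤ sval A j := by rw [hsvalA]; exact Real.sqrt_nonneg _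
  by_cases hjm : j < m
  · -- main case
    set B := M₁ * A * M₂ᴴ with hBdef
    set E := A * M₂ᴴ with hEdef
    set hBB := Matrix.isHermitian_conjTranspose_mul_self B with hBBdef
    set hEE := Matrix.isHermitian_conjTranspose_mul_self E with hEEdef
    set hEEc := Matrix.isHermitian_mul_conjTranspose_self E with hEEcdef
    set hAAc := Matrix.isHermitian_mul_conjTranspose_self A with hAAcdef
    have hq1 : ∀ x : Fin m → ℂ, quad (Bᴴ * B) x = nsq (M₁ *ᵥ (E *ᵥ x)) := by
      intro x
      rw [quad_conjTranspose_mul_self]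
      congr 1
      rw [hBdef, hEdef, Matrix.mul_assoc, ← mulVec_mulVec]
    have hmemE : ∀ x : Fin m → ℂ, E *ᵥ x ∈ Set.range A.mulVec := fun x =>
      ⟨M₂ᴴ *ᵥ x, by rw [hEdef, ← mulVec_mulVec]⟩
    have hquadE : ∀ x, quad (Eᴴ * E) x = nsq (E *ᵥ x) := quad_conjTranspose_mul_self E
    have hub1 : ∀ x, quad (Bᴴ * B) x ≤ (1 + ε) * quad (Eᴴ * E) x := fun x => by
      rw [hq1, hquadE]; exact (hM₁ _ (hmemE x)).2
    have hlb1 : ∀ x, quad (Eᴴ * E) x ≤ (1 - ε)⁻¹ * quad (Bᴴ * B) x := fun x => by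
      rw [hq1, hquadE]
      have h := (hM₁ _ (hmemE x)).1
      calc nsq (E *ᵥ x) = (1 - ε)⁻¹ * ((1 - ε) * nsq (E *ᵥ x)) := by field_simp
        _ ≤ (1 - ε)⁻¹ * nsq (M₁ *ᵥ (E *ᵥ x)) :=
            mul_le_mul_of_nonneg_left h (le_of_lt (inv_pos.mpr hd1))
    have c1 : sortedEig hBB ⟨j, hjm⟩ ≤ (1 + ε) * sortedEig hEE ⟨j, hjm⟩ :=
      sortedEig_le_mul hBB hEE hd2 hub1 _
    have c2 : sortedEig hEE ⟨j, hjm⟩ ≤ (1 - ε)⁻¹ * sortedEig hBB ⟨j, hjm⟩ :=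
      sortedEig_le_mul hEE hBB (le_of_lt (inv_pos.mpr hd1)) hlb1 _
    have c3 : sortedEig hEE ⟨j, hjm⟩ = sortedEig hEEc ⟨j, hjN⟩ := swap_eq E hjN hjm
    have hq2 : ∀ x : Fin N → ℂ, quad (E * Eᴴ) x = nsq (M₂ *ᵥ (Aᴴ *ᵥ x)) := by
      intro x
      rw [show E * Eᴴ = (Eᴴ)ᴴ * Eᴴ by rw [conjTranspose_conjTranspose],
        quad_conjTranspose_mul_self]
      congr 1
      rw [hEdef, conjTranspose_mul, conjTranspose_conjTranspose, ← mulVec_mulVec]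
    have hq3 : ∀ x, quad (A * Aᴴ) x = nsq (Aᴴ *ᵥ x) := fun x => by
      rw [show A * Aᴴ = (Aᴴ)ᴴ * Aᴴ by rw [conjTranspose_conjTranspose],
        quad_conjTranspose_mul_self]
    have hmemA : ∀ x : Fin N → ℂ, Aᴴ *ᵥ x ∈ Set.range (Aᴴ).mulVec := fun x => ⟨x, rfl⟩
    have hub2 : ∀ x, quad (E * Eᴴ) x ≤ (1 + ε) * quad (A * Aᴴ) x := fun x => by
      rw [hq2, hq3]; exact (hM₂ _ (hmemA x)).2
    have hlb2 : ∀ x, quad (A * Aᴴ) x ≤ (1 - ε)⁻¹ * quad (E * Eᴴ) x := fun x => by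
      rw [hq2, hq3]
      have h := (hM₂ _ (hmemA x)).1
      calc nsq (Aᴴ *ᵥ x) = (1 - ε)⁻¹ * ((1 - ε) * nsq (Aᴴ *ᵥ x)) := by field_simp
        _ ≤ (1 - ε)⁻¹ * nsq (M₂ *ᵥ (Aᴴ *ᵥ x)) :=
            mul_le_mul_of_nonneg_left h (le_of_lt (inv_pos.mpr hd1))
    have c4 : sortedEig hEEc ⟨j, hjN⟩ ≤ (1 + ε) * sortedEig hAAc ⟨j, hjN⟩ :=
      sortedEig_le_mul hEEc hAAc hd2 hub2 _
    have c5 : sortedEig hAAc ⟨j, hjN⟩ ≤ (1 - ε)⁻¹ * sortedEig hEEc ⟨j, hjN⟩ :=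
      sortedEig_le_mul hAAc hEEc (le_of_lt (inv_pos.mpr hd1)) hlb2 _
    have c6 : sortedEig hAAc ⟨j, hjN⟩ = sortedEig hAA ⟨j, hjN⟩ := by
      have h := swap_eq Aᴴ hjN hjN
      have e1 : sortedEig (Matrix.isHermitian_conjTranspose_mul_self Aᴴ) ⟨j, hjN⟩ =
          sortedEig hAAc ⟨j, hjN⟩ :=
        sortedEig_congr (by rw [conjTranspose_conjTranspose]) _ _ _
      have e2 : sortedEig (Matrix.isHermitian_mul_conjTranspose_self Aᴴ) ⟨j, hjN⟩ =
          sortedEig hAA ⟨j, hjN⟩ :=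
        sortedEig_congr (by rw [conjTranspose_conjTranspose]) _ _ _
      rw [e1, e2] at h
      exact h
    -- combine
    set lamB := sortedEig hBB ⟨j, hjm⟩
    set lamA := sortedEig hAA ⟨j, hjN⟩
    have hup : lamB ≤ (1 + ε)^2 * lamA := by
      calc lamB ≤ (1 + ε) * sortedEig hEE ⟨j, hjm⟩ := c1
        _ = (1 + ε) * sortedEig hEEc ⟨j, hjN⟩ := by rw [c3]
        _ ≤ (1 + ε) * ((1 + ε) * sortedEig hAAc ⟨j, hjN⟩) :=
            mul_le_mul_of_nonneg_left c4 hd2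
        _ = (1 + ε)^2 * lamA := by rw [c6]; ring
    have hlo : (1 - ε)^2 * lamA ≤ lamB := by
      have h : lamA ≤ (1 - ε)⁻¹ * ((1 - ε)⁻¹ * lamB) := by
        calc lamA = sortedEig hAAc ⟨j, hjN⟩ := c6.symm
          _ ≤ (1 - ε)⁻¹ * sortedEig hEEc ⟨j, hjN⟩ := c5
          _ = (1 - ε)⁻¹ * sortedEig hEE ⟨j, hjm⟩ := by rw [c3]
          _ ≤ (1 - ε)⁻¹ * ((1 - ε)⁻¹ * lamB) :=
              mul_le_mul_of_nonneg_left c2 (le_of_lt (inv_pos.mpr hd1))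
      have h2 := mul_le_mul_of_nonneg_left h (sq_nonneg (1 - ε))
      calc (1 - ε)^2 * lamA ≤ (1 - ε)^2 * ((1 - ε)⁻¹ * ((1 - ε)⁻¹ * lamB)) := h2
        _ = lamB := by field_simp
    -- sqrt step
    have hlamB0 : 0 ≤ lamB := sortedEig_nonneg hBB (fun x => by
      rw [quad_conjTranspose_mul_self]; exact nsq_nonneg _) _
    have hsvalB : sval B j = Real.sqrt lamB := sval_eq B hjm
    have hsqA : Real.sqrt ((1 + ε)^2 * lamA) = (1 + ε) * sval A j := by
      rw [hsvalA, Real.sqrt_mul (sq_nonneg _), Real.sqrt_sq (by linarith : (0:ℝ) ≤ 1 + ε)]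
    have hsqA' : Real.sqrt ((1 - ε)^2 * lamA) = (1 - ε) * sval A j := by
      rw [hsvalA, Real.sqrt_mul (sq_nonneg _), Real.sqrt_sq (le_of_lt hd1)]
    have hBup : sval B j ≤ (1 + ε) * sval A j := by
      rw [hsvalB, ← hsqA]
      exact Real.sqrt_le_sqrt hup
    have hBlo : (1 - ε) * sval A j ≤ sval B j := by
      rw [hsvalB, ← hsqA']
      exact Real.sqrt_le_sqrt hlo
    have hpos : 0 ≤ ε * (1 + ε) * sval A j :=
      mul_nonneg (mul_nonneg hε0.le (by linarith)) hsA0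
    rw [abs_le]
    constructor
    · linarith
    · linarith
  · -- j ≥ m
    have hrank_le : A.rank ≤ m := rank_le_of_jl A M₁ ε hε1 hM₁
    have hrk : (Aᴴ * A).rank ≤ j := by
      have := Matrix.rank_mul_le_right Aᴴ A
      omega
    have hA0 : sortedEig hAA ⟨j, hjN⟩ = 0 :=
      sortedEig_eq_zero_of_rank_le hAA hqA ⟨j, hjN⟩ hrk
    have h1 : sval A j = 0 := by rw [hsvalA, hA0, Real.sqrt_zero]
    have h2 : sval (M₁ * A * M₂ᴴ) j = 0 := sval_eq_zero _ hjm
    rw [h1, h2]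
    simp
end

section
/- There exists an absolute constant c ∈ ℝ⁺ such that the following holds. Let s ∈ {1,…,N}, η ∈ (0,1), and suppose M ∈ ℝ^{m×N} has the Restricted Isometry Property of order (4s, 0.1). Then there exists a map g : ℂ^m → ℂ^N such that for all u ∈ ℂ^N and all e ∈ ℂ^m: ‖u − g(Mu + e)‖₂ ≤ c · max{ η, (1/√s)·‖u − u_s‖₁ + ‖e‖₂ }. -/
/-- The Euclidean (ℓ²) norm of a vector in `ℂ^n`. -/
noncomputable def l2 {n : ℕ} (x : Fin n → ℂ) : ℝ := Real.sqrt (nsq x)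

/-- A real matrix `M` has the Restricted Isometry Property of order `(s, ε)`:
`(1−ε)‖x‖₂² ≤ ‖Mx‖₂² ≤ (1+ε)‖x‖₂²` for all `x ∈ ℂ^N` with at most `s` nonzero entries. -/
def RIP {m N : ℕ} (M : Matrix (Fin m) (Fin N) ℝ) (s : ℕ) (ε : ℝ) : Prop :=
  ∀ x : Fin N → ℂ, Set.ncard {i | x i ≠ 0} ≤ s →
    (1 - ε) * nsq x ≤ nsq ((M.map (fun a => (a : ℂ))).mulVec x) ∧
    nsq ((M.map (fun a => (a : ℂ))).mulVec x) ≤ (1 + ε) * nsq x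

/-- The best `s`-sparse approximation error of `u` in the ℓ¹ norm:
`‖u − u_s‖₁ = inf { ‖u − v‖₁ : v is s-sparse }`. -/
noncomputable def bestErr1 {N : ℕ} (u : Fin N → ℂ) (s : ℕ) : ℝ :=
  sInf {t : ℝ | ∃ v : Fin N → ℂ, Set.ncard {i | v i ≠ 0} ≤ s ∧ t = ∑ i, ‖u i - v i‖}

/- ## Auxiliary lemmas -/

lemma nsq_nonneg {n : ℕ} (x : Fin n → ℂ) : 0 ≤ nsq x :=
  Finset.sum_nonneg fun i _ => by positivity

lemma l2_nonneg {n : ℕ} (x : Fin n → ℂ) : 0 ≤ l2 x := Real.sqrt_nonneg _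

lemma l2_zero {n : ℕ} : l2 (0 : Fin n → ℂ) = 0 := by simp [l2, nsq]

lemma l2_eq_norm {n : ℕ} (x : Fin n → ℂ) :
    l2 x = ‖((WithLp.equiv 2 (Fin n → ℂ)).symm x : EuclideanSpace ℂ (Fin n))‖ := by
  rw [EuclideanSpace.norm_eq]; simp [l2, nsq]

lemma l2_add_le {n : ℕ} (x y : Fin n → ℂ) : l2 (x + y) ≤ l2 x + l2 y := by
  simp only [l2_eq_norm]
  exact norm_add_le ((WithLp.equiv 2 (Fin n → ℂ)).symm x) ((WithLp.equiv 2 (Fin n → ℂ)).symm y)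

lemma l2_neg {n : ℕ} (x : Fin n → ℂ) : l2 (-x) = l2 x := by simp [l2, nsq]

/-- Restriction of a vector to a finite index set. -/
noncomputable def restr {N : ℕ} (T : Finset (Fin N)) (z : Fin N → ℂ) : Fin N → ℂ :=
  fun i => if i ∈ T then z i else 0

lemma l2_le_two_of_nsq {n k : ℕ} {x : Fin n → ℂ} {y : Fin k → ℂ} (h : nsq x ≤ 4 * nsq y) :
    l2 x ≤ 2 * l2 y := by
  rw [l2, l2]
  calc Real.sqrt (nsq x) ≤ Real.sqrt (4 * nsq y) := Real.sqrt_le_sqrt h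
    _ = 2 * Real.sqrt (nsq y) := by
        rw [show (4:ℝ) * nsq y = 2^2 * nsq y by ring, Real.sqrt_mul (by positivity),
          Real.sqrt_sq (by norm_num)]

lemma exists_top_set' {N : ℕ} (z : Fin N → ℂ) (s : ℕ) :
    ∃ T : Finset (Fin N), T.card = min s N ∧ ∀ i ∉ T, ∀ j ∈ T, ‖z i‖ ≤ ‖z j‖ := by
  have hle : min s N ≤ (Finset.univ : Finset (Fin N)).card := by simp [min_le_right]
  obtain ⟨T0, hT0sub, hT0card⟩ := Finset.exists_subset_card_eq hle
  have hne : (Finset.univ.powersetCard (min s N) : Finset (Finset (Fin N))).Nonempty :=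
    ⟨T0, by simp [Finset.mem_powersetCard, hT0sub, hT0card]⟩
  obtain ⟨T, hTmem, hTmax⟩ :=
    (Finset.univ.powersetCard (min s N)).exists_max_image (fun T => ∑ j ∈ T, ‖z j‖) hne
  have hTcard : T.card = min s N := (Finset.mem_powersetCard.mp hTmem).2
  refine ⟨T, hTcard, fun i hi j hj => ?_⟩
  by_contra hlt
  push_neg at hlt
  have hiT' : i ∉ T.erase j := fun h => hi (Finset.mem_of_mem_erase h)
  have hT'card : (insert i (T.erase j)).card = min s N := by
    rw [Finset.card_insert_of_notMem hiT', Finset.card_erase_of_mem hj, hTcard]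
    have : 1 ≤ min s N := by rw [← hTcard]; exact Finset.card_pos.mpr ⟨j, hj⟩
    omega
  have hsum := hTmax (insert i (T.erase j)) (by simp [Finset.mem_powersetCard, hT'card])
  rw [Finset.sum_insert hiT'] at hsum
  have hsplit : ∑ x ∈ T, ‖z x‖ = ‖z j‖ + ∑ x ∈ T.erase j, ‖z x‖ :=
    (Finset.add_sum_erase T (fun x => ‖z x‖) hj).symm
  rw [hsplit] at hsum
  linarith

lemma supp_restr {N : ℕ} (T : Finset (Fin N)) (z : Fin N → ℂ) :
    Set.ncard {i | restr T z i ≠ 0} ≤ T.card := by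
  have h : {i | restr T z i ≠ 0} ⊆ (T : Set (Fin N)) := by
    intro i hi
    by_contra hnot
    rw [Finset.mem_coe] at hnot
    exact hi (by simp [restr, hnot])
  calc Set.ncard {i | restr T z i ≠ 0} ≤ Set.ncard (T : Set (Fin N)) :=
        Set.ncard_le_ncard h (T : Set (Fin N)).toFinite
    _ = T.card := Set.ncard_coe_finset T

/-- Key induction: image of the tail under `A` is controlled by `ℓ¹/√s`. -/
lemma tail_image_bound {m N : ℕ} (A : Matrix (Fin m) (Fin N) ℂ) {s : ℕ} (hs : 1 ≤ s)
    (hup : ∀ z : Fin N → ℂ, Set.ncard {i | z i ≠ 0} ≤ s → l2 (A.mulVec z) ≤ 2 * l2 z) :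
    ∀ n (z : Fin N → ℂ), Set.ncard {i | z i ≠ 0} ≤ n →
      ∃ T : Finset (Fin N), T.card = min s N ∧ (∀ i ∉ T, ∀ j ∈ T, ‖z i‖ ≤ ‖z j‖) ∧
        l2 (A.mulVec (z - restr T z)) ≤ 2 * (∑ i, ‖z i‖) / Real.sqrt s := by
  intro n
  induction n using Nat.strong_induction_on with
  | _ n IH =>
  intro z hz
  obtain ⟨T, hTcard, hTtop⟩ := exists_top_set' z s
  by_cases hsub : {i | z i ≠ 0} ⊆ (T : Set (Fin N))
  · refine ⟨T, hTcard, hTtop, ?_⟩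
    have hzero : z - restr T z = 0 := by
      funext i
      by_cases hiT : i ∈ T
      · simp [restr, hiT]
      · have hz0 : z i = 0 := by
          by_contra h0
          exact hiT (Finset.mem_coe.mp (hsub h0))
        simp [restr, hiT, hz0]
    rw [hzero, Matrix.mulVec_zero, l2_zero]
    have : (0:ℝ) ≤ ∑ i, ‖z i‖ := Finset.sum_nonneg fun i _ => norm_nonneg _
    positivity
  · obtain ⟨i0, hi0supp, hi0T⟩ := Set.not_subset.mp hsub
    rw [Set.mem_setOf_eq] at hi0supp
    rw [Finset.mem_coe] at hi0T
    have hTsupp : (T : Set (Fin N)) ⊆ {i | z i ≠ 0} := by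
      intro j hj
      rw [Finset.mem_coe] at hj
      have hle := hTtop i0 hi0T j hj
      rw [Set.mem_setOf_eq]
      intro h0
      rw [h0, norm_zero] at hle
      exact hi0supp (norm_le_zero_iff.mp hle)
    have hTs : T.card = s := by
      by_contra hne
      have hNs : min s N = N ∧ N < s := by omega
      have hTuniv : T = Finset.univ := Finset.eq_univ_of_card T (by rw [hTcard, hNs.1]; simp)
      exact hi0T (hTuniv ▸ Finset.mem_univ i0)
    set z' : Fin N → ℂ := z - restr T z with hz'def
    have hz'val : ∀ i, z' i = if i ∈ T then 0 else z i := by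
      intro i
      by_cases hiT : i ∈ T <;> simp [hz'def, restr, hiT]
    have hsupp' : {i | z' i ≠ 0} = {i | z i ≠ 0} \ (T : Set (Fin N)) := by
      ext i
      by_cases hiT : i ∈ T <;> simp [hz'val, hiT]
    have hcard_supp : s ≤ Set.ncard {i | z i ≠ 0} := by
      calc s = T.card := hTs.symm
        _ = Set.ncard (T : Set (Fin N)) := (Set.ncard_coe_finset T).symm
        _ ≤ Set.ncard {i | z i ≠ 0} := Set.ncard_le_ncard hTsupp (Set.toFinite _)
    have hcard' : Set.ncard {i | z' i ≠ 0} = Set.ncard {i | z i ≠ 0} - s := by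
      rw [hsupp', Set.ncard_diff hTsupp (Set.toFinite _), Set.ncard_coe_finset, hTs]
    obtain ⟨T', hT'card, _, hT'bound⟩ := IH (n-1) (by omega) z' (by omega)
    set ST : ℝ := ∑ j ∈ T, ‖z j‖ with hSTdef
    have hSTnn : 0 ≤ ST := Finset.sum_nonneg fun j _ => norm_nonneg _
    have hA0 : ∀ i, (s:ℝ) * ‖z' i‖ ≤ ST := by
      intro i
      by_cases hiT : i ∈ T
      · rw [hz'val i, if_pos hiT, norm_zero, mul_zero]; exact hSTnn
      · rw [hz'val i, if_neg hiT]
        calc (s:ℝ) * ‖z i‖ = ∑ _j ∈ T, ‖z i‖ := by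
              rw [Finset.sum_const, hTs, nsmul_eq_mul]
          _ ≤ ∑ j ∈ T, ‖z j‖ := Finset.sum_le_sum fun j hj => hTtop i hiT j hj
    have hspos : (0:ℝ) < s := by exact_mod_cast hs
    have hrest : l2 (restr T' z') ≤ ST / Real.sqrt s := by
      have e1 : nsq (restr T' z') = ∑ i ∈ T', ‖z' i‖^2 := by
        rw [nsq, ← Finset.sum_subset (Finset.subset_univ T')
          (fun i _ hiT' => by simp [restr, hiT'])]
        exact Finset.sum_congr rfl fun i hi => by simp [restr, hi]
      have e2 : nsq (restr T' z') ≤ (s:ℝ) * (ST / s)^2 := by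
        rw [e1]
        calc ∑ i ∈ T', ‖z' i‖^2 ≤ ∑ _i ∈ T', (ST/s)^2 := by
              refine Finset.sum_le_sum fun i _ => ?_
              have h1 : ‖z' i‖ ≤ ST / s := by
                rw [le_div_iff₀ hspos]; linarith [hA0 i]
              exact pow_le_pow_left₀ (norm_nonneg _) h1 2
          _ = (T'.card : ℝ) * (ST/s)^2 := by rw [Finset.sum_const, nsmul_eq_mul]
          _ ≤ (s:ℝ) * (ST/s)^2 := by
              have h2 : (T'.card : ℝ) ≤ s := by
                rw [hT'card]; exact_mod_cast min_le_left s N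
              have h3 : (0:ℝ) ≤ (ST/s)^2 := sq_nonneg _
              nlinarith
      rw [l2]
      calc Real.sqrt (nsq (restr T' z')) ≤ Real.sqrt ((s:ℝ) * (ST/s)^2) :=
            Real.sqrt_le_sqrt e2
        _ = ST / Real.sqrt s := by
            rw [show (s:ℝ) * (ST/s)^2 = ST^2 / s by field_simp,
              Real.sqrt_div (sq_nonneg ST), Real.sqrt_sq hSTnn]
    have hl1split : ∑ i, ‖z' i‖ = (∑ i, ‖z i‖) - ST := by
      have hv : ∀ i, ‖z' i‖ = ‖z i‖ - if i ∈ T then ‖z i‖ else 0 := by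
        intro i
        by_cases hiT : i ∈ T <;> simp [hz'val, hiT]
      simp only [hv]
      rw [Finset.sum_sub_distrib, hSTdef]
      congr 1
      rw [Finset.sum_ite_mem, Finset.univ_inter]
    have hdecomp : A.mulVec z' = A.mulVec (restr T' z') + A.mulVec (z' - restr T' z') := by
      rw [← Matrix.mulVec_add]
      congr 1
      ring
    have hupT' : l2 (A.mulVec (restr T' z')) ≤ 2 * l2 (restr T' z') :=
      hup _ (le_trans (supp_restr _ _) (by rw [hT'card]; exact min_le_left s N))
    refine ⟨T, hTcard, hTtop, ?_⟩
    calc l2 (A.mulVec z') ≤ l2 (A.mulVec (restr T' z')) + l2 (A.mulVec (z' - restr T' z')) := by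
          rw [hdecomp]; exact l2_add_le _ _
      _ ≤ 2 * (ST / Real.sqrt s) + 2 * (∑ i, ‖z' i‖) / Real.sqrt s := by
          linarith [hT'bound, hrest]
      _ = 2 * (∑ i, ‖z i‖) / Real.sqrt s := by
          have hQ : (0:ℝ) < Real.sqrt s := Real.sqrt_pos.mpr hspos
          rw [hl1split]
          field_simp
          ring

/-- ℓ² bound on the tail. -/
lemma l2_tail {N s : ℕ} (hs : 1 ≤ s) (z : Fin N → ℂ) (T : Finset (Fin N))
    (hTcard : T.card = min s N) (hTtop : ∀ i ∉ T, ∀ j ∈ T, ‖z i‖ ≤ ‖z j‖) :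
    l2 (z - restr T z) ≤ (∑ i, ‖z i‖) / Real.sqrt s := by
  have hspos : (0:ℝ) < s := by exact_mod_cast hs
  have hL1nn : (0:ℝ) ≤ ∑ i, ‖z i‖ := Finset.sum_nonneg fun i _ => norm_nonneg _
  rcases lt_or_ge N s with hN | hN
  · have hTuniv : T = Finset.univ := Finset.eq_univ_of_card T (by rw [hTcard]; simp; omega)
    have hzero : z - restr T z = 0 := by
      funext i
      simp [restr, hTuniv]
    rw [hzero, l2_zero]
    positivity
  · have hTs : T.card = s := by rw [hTcard]; omega
    set L1 : ℝ := ∑ i, ‖z i‖ with hL1def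
    have hA0 : ∀ i, (s:ℝ) * ‖(z - restr T z) i‖ ≤ L1 := by
      intro i
      by_cases hiT : i ∈ T
      · simp only [Pi.sub_apply, restr, if_pos hiT, sub_self, norm_zero, mul_zero]
        exact hL1nn
      · simp only [Pi.sub_apply, restr, if_neg hiT, sub_zero]
        calc (s:ℝ) * ‖z i‖ = ∑ _j ∈ T, ‖z i‖ := by
              rw [Finset.sum_const, hTs, nsmul_eq_mul]
          _ ≤ ∑ j ∈ T, ‖z j‖ := Finset.sum_le_sum fun j hj => hTtop i hiT j hj
          _ ≤ L1 := Finset.sum_le_sum_of_subset_of_nonneg (Finset.subset_univ T)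
              (fun i _ _ => norm_nonneg _)
    have habs : ∀ i, ‖(z - restr T z) i‖ ≤ ‖z i‖ := by
      intro i
      by_cases hiT : i ∈ T <;>
        simp [Pi.sub_apply, restr, hiT]
    have e2 : nsq (z - restr T z) ≤ L1^2 / s := by
      rw [nsq]
      calc ∑ i, ‖(z - restr T z) i‖^2 ≤ ∑ i, (L1/s) * ‖z i‖ := by
            refine Finset.sum_le_sum fun i _ => ?_
            have h1 : ‖(z - restr T z) i‖ ≤ L1/s := by
              rw [le_div_iff₀ hspos]; linarith [hA0 i]
            calc ‖(z - restr T z) i‖^2 = ‖(z - restr T z) i‖ * ‖(z - restr T z) i‖ := sq _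
              _ ≤ (L1/s) * ‖z i‖ :=
                  mul_le_mul h1 (habs i) (norm_nonneg _) (by positivity)
        _ = (L1/s) * L1 := by rw [← Finset.mul_sum]
        _ = L1^2/s := by ring
    rw [l2]
    calc Real.sqrt (nsq (z - restr T z)) ≤ Real.sqrt (L1^2 / s) := Real.sqrt_le_sqrt e2
      _ = L1 / Real.sqrt s := by rw [Real.sqrt_div (sq_nonneg L1), Real.sqrt_sq hL1nn]

lemma supp_add_le {N : ℕ} (x y : Fin N → ℂ) {a b : ℕ}
    (hx : Set.ncard {i | x i ≠ 0} ≤ a) (hy : Set.ncard {i | y i ≠ 0} ≤ b) :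
    Set.ncard {i | (x + y) i ≠ 0} ≤ a + b := by
  have hsub : {i | (x + y) i ≠ 0} ⊆ {i | x i ≠ 0} ∪ {i | y i ≠ 0} := by
    intro i hi
    by_contra hnot
    simp only [Set.mem_union, Set.mem_setOf_eq, not_or, not_not] at hnot
    exact hi (by simp [Pi.add_apply, hnot.1, hnot.2])
  calc Set.ncard {i | (x + y) i ≠ 0}
      ≤ Set.ncard ({i | x i ≠ 0} ∪ {i | y i ≠ 0}) :=
        Set.ncard_le_ncard hsub (Set.toFinite _)
    _ ≤ Set.ncard {i | x i ≠ 0} + Set.ncard {i | y i ≠ 0} := Set.ncard_union_le _ _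
    _ ≤ a + b := by omega

lemma supp_sub_le {N : ℕ} (x y : Fin N → ℂ) {a b : ℕ}
    (hx : Set.ncard {i | x i ≠ 0} ≤ a) (hy : Set.ncard {i | y i ≠ 0} ≤ b) :
    Set.ncard {i | (x - y) i ≠ 0} ≤ a + b := by
  have h : x - y = x + (-y) := by ring
  rw [h]
  refine supp_add_le x (-y) hx ?_
  have : {i | (-y) i ≠ 0} = {i | y i ≠ 0} := by ext i; simp
  rw [this]; exact hy

/-- (CoSaMP-type guarantee.)  There is an absolute constant `c` such that for
any matrix `M` with the RIP of order `(4s, 0.1)` there is a recovery map `g : ℂ^m → ℂ^N` with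
`‖u − g(Mu + e)‖₂ ≤ c·max{η, ‖u − u_s‖₁/√s + ‖e‖₂}` for all `u`, `e`. -/
theorem stmt_11 :
    ∃ c : ℝ, 0 < c ∧
      ∀ (N m s : ℕ), 1 ≤ s → s ≤ N →
      ∀ η : ℝ, 0 < η → η < 1 →
      ∀ M : Matrix (Fin m) (Fin N) ℝ, RIP M (4 * s) 0.1 →
      ∃ g : (Fin m → ℂ) → (Fin N → ℂ),
        ∀ (u : Fin N → ℂ) (e : Fin m → ℂ),
          l2 (u - g ((M.map (fun a => (a : ℂ))).mulVec u + e)) ≤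
            c * max η (bestErr1 u s / Real.sqrt s + l2 e) := by
  refine ⟨100, by norm_num, ?_⟩
  intro N m s hs hsN η hη hη1 M hRIP
  set A : Matrix (Fin m) (Fin N) ℂ := M.map (fun a => (a : ℂ)) with hA
  have hspos : (0:ℝ) < s := by exact_mod_cast hs
  have hQ : (0:ℝ) < Real.sqrt s := Real.sqrt_pos.mpr hspos
  have hup : ∀ z : Fin N → ℂ, Set.ncard {i | z i ≠ 0} ≤ s → l2 (A.mulVec z) ≤ 2 * l2 z := by
    intro z hz
    have h := (hRIP z (le_trans hz (by omega))).2
    apply l2_le_two_of_nsq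
    have h0 := nsq_nonneg z
    norm_num at h
    linarith
  have hdown : ∀ d : Fin N → ℂ, Set.ncard {i | d i ≠ 0} ≤ 4*s →
      l2 d ≤ 2 * l2 (A.mulVec d) := by
    intro d hd
    have h := (hRIP d hd).1
    apply l2_le_two_of_nsq
    have h0 := nsq_nonneg (A.mulVec d)
    norm_num at h
    linarith
  -- the decoder
  have hdec : ∀ y : Fin m → ℂ, ∃ x : Fin N → ℂ, Set.ncard {i | x i ≠ 0} ≤ 2*s ∧
      ∀ v : Fin N → ℂ, Set.ncard {i | v i ≠ 0} ≤ 2*s →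
        l2 (A.mulVec x - y) ≤ l2 (A.mulVec v - y) + η := by
    intro y
    set S : Set ℝ := {t | ∃ v : Fin N → ℂ, Set.ncard {i | v i ≠ 0} ≤ 2*s ∧
      t = l2 (A.mulVec v - y)} with hS
    have hSne : S.Nonempty := ⟨l2 (A.mulVec 0 - y), 0, by simp, rfl⟩
    have hSbdd : BddBelow S := ⟨0, fun t ht => by
      obtain ⟨v, _, rfl⟩ := ht
      exact l2_nonneg _⟩
    obtain ⟨t, ht, htlt⟩ := Real.lt_sInf_add_pos hSne hη
    obtain ⟨x, hxs, rfl⟩ := ht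
    refine ⟨x, hxs, fun v hv => ?_⟩
    have h1 : sInf S ≤ l2 (A.mulVec v - y) := csInf_le hSbdd ⟨v, hv, rfl⟩
    linarith
  choose g hg1 hg2 using hdec
  refine ⟨g, ?_⟩
  intro u e
  set y : Fin m → ℂ := A.mulVec u + e with hy
  refine le_of_forall_pos_le_add ?_
  intro δ hδ
  -- near-optimal s-sparse approximation of u
  set B : Set ℝ := {t : ℝ | ∃ v : Fin N → ℂ, Set.ncard {i | v i ≠ 0} ≤ s ∧
    t = ∑ i, ‖u i - v i‖} with hB
  have hBne : B.Nonempty := ⟨∑ i, ‖u i - (0:Fin N → ℂ) i‖, 0, by simp, rfl⟩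
  have hδ' : (0:ℝ) < δ * Real.sqrt s / 9 := by positivity
  obtain ⟨t, ht, htlt⟩ := Real.lt_sInf_add_pos hBne hδ'
  obtain ⟨vh, hvs, rfl⟩ := ht
  have hσ : ∑ i, ‖u i - vh i‖ < bestErr1 u s + δ * Real.sqrt s / 9 := htlt
  have hσnn : 0 ≤ bestErr1 u s := by
    apply Real.sInf_nonneg
    rintro x ⟨v, _, rfl⟩
    exact Finset.sum_nonneg fun i _ => norm_nonneg _
  set w : Fin N → ℂ := u - vh with hw
  set L1 : ℝ := ∑ i, ‖w i‖ with hL1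
  have hL1eq : L1 = ∑ i, ‖u i - vh i‖ := rfl
  have hL1nn : 0 ≤ L1 := Finset.sum_nonneg fun i _ => norm_nonneg _
  have hsuppw : Set.ncard {i | w i ≠ 0} ≤ N := by
    calc Set.ncard {i | w i ≠ 0} ≤ Set.ncard (Set.univ : Set (Fin N)) :=
          Set.ncard_le_ncard (Set.subset_univ _) (Set.toFinite _)
      _ = N := by simp [Set.ncard_univ]
  obtain ⟨T, hTcard, hTtop, hTimg⟩ := tail_image_bound A hs hup N w hsuppw
  have hTl2 := l2_tail hs w T hTcard hTtop
  set a : Fin N → ℂ := vh + restr T w with ha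
  have hua : u - a = w - restr T w := by
    funext i
    simp only [ha, hw, Pi.sub_apply, Pi.add_apply]
    ring
  have has : Set.ncard {i | a i ≠ 0} ≤ 2*s := by
    have h2' : Set.ncard {i | restr T w i ≠ 0} ≤ s :=
      le_trans (supp_restr T w) (by rw [hTcard]; exact min_le_left s N)
    have h3' := supp_add_le vh (restr T w) hvs h2'
    rw [ha]
    omega
  set K : ℝ := L1 / Real.sqrt s with hK
  have hKnn : 0 ≤ K := by positivity
  have h1 : l2 (u - a) ≤ K := by rw [hua]; exact hTl2
  have h2 : l2 (A.mulVec (u - a)) ≤ 2 * K := by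
    rw [hua, hK, ← mul_div_assoc]
    exact hTimg
  have h3 : l2 (A.mulVec a - y) ≤ 2 * K + l2 e := by
    have heq : A.mulVec a - y = -(A.mulVec (u - a)) + -e := by
      rw [hy, Matrix.mulVec_sub]
      ring
    rw [heq]
    calc l2 (-(A.mulVec (u - a)) + -e) ≤ l2 (-(A.mulVec (u - a))) + l2 (-e) := l2_add_le _ _
      _ = l2 (A.mulVec (u - a)) + l2 e := by rw [l2_neg, l2_neg]
      _ ≤ 2 * K + l2 e := by linarith
  have h4 : l2 (A.mulVec (g y) - y) ≤ 2 * K + l2 e + η := by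
    have := hg2 y a has
    linarith
  have h5 : l2 (A.mulVec (g y - a)) ≤ 4 * K + 2 * l2 e + η := by
    have heq : A.mulVec (g y - a) = (A.mulVec (g y) - y) + -(A.mulVec a - y) := by
      rw [Matrix.mulVec_sub]
      ring
    rw [heq]
    calc l2 ((A.mulVec (g y) - y) + -(A.mulVec a - y))
        ≤ l2 (A.mulVec (g y) - y) + l2 (-(A.mulVec a - y)) := l2_add_le _ _
      _ = l2 (A.mulVec (g y) - y) + l2 (A.mulVec a - y) := by rw [l2_neg]
      _ ≤ 4 * K + 2 * l2 e + η := by linarith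
  have hga_supp : Set.ncard {i | (g y - a) i ≠ 0} ≤ 4*s := by
    have := supp_sub_le (g y) a (hg1 y) has
    omega
  have h6 : l2 (g y - a) ≤ 8 * K + 4 * l2 e + 2 * η := by
    have := hdown (g y - a) hga_supp
    linarith
  have h7 : l2 (u - g y) ≤ 9 * K + 4 * l2 e + 2 * η := by
    have heq : u - g y = (u - a) + -(g y - a) := by ring
    rw [heq]
    calc l2 ((u - a) + -(g y - a)) ≤ l2 (u - a) + l2 (-(g y - a)) := l2_add_le _ _
      _ = l2 (u - a) + l2 (g y - a) := by rw [l2_neg]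
      _ ≤ 9 * K + 4 * l2 e + 2 * η := by linarith
  -- convert L1 to bestErr1
  have h8 : K ≤ bestErr1 u s / Real.sqrt s + δ / 9 := by
    have hle : L1 ≤ bestErr1 u s + δ * Real.sqrt s / 9 := by
      rw [hL1eq]; exact le_of_lt hσ
    have hstep : K ≤ (bestErr1 u s + δ * Real.sqrt s / 9) / Real.sqrt s := by
      rw [hK]
      gcongr
    calc K ≤ (bestErr1 u s + δ * Real.sqrt s / 9) / Real.sqrt s := hstep
      _ = bestErr1 u s / Real.sqrt s + δ / 9 := by
          rw [add_div]
          congr 1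
          rw [div_div, mul_comm (9:ℝ) (Real.sqrt s), ← div_div,
            mul_div_assoc, div_self (ne_of_gt hQ), mul_one]
  set R : ℝ := max η (bestErr1 u s / Real.sqrt s + l2 e) with hR
  have hRη : η ≤ R := le_max_left _ _
  have hRσ : bestErr1 u s / Real.sqrt s + l2 e ≤ R := le_max_right _ _
  have hRnn : 0 ≤ R := le_trans (le_of_lt hη) hRη
  have hennn : 0 ≤ l2 e := l2_nonneg _
  have hbQ : 0 ≤ bestErr1 u s / Real.sqrt s := by positivity
  calc l2 (u - g y) ≤ 9 * K + 4 * l2 e + 2 * η := h7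
    _ ≤ 9 * (bestErr1 u s / Real.sqrt s + δ / 9) + 4 * l2 e + 2 * η := by linarith
    _ = 9 * (bestErr1 u s / Real.sqrt s) + 4 * l2 e + 2 * η + δ := by ring
    _ ≤ 9 * R + 2 * R + δ := by linarith
    _ ≤ 100 * R + δ := by linarith
end

section
/- Let W ∈ {0,1}^{m'×N} be (K, α)-coherent and let B'_N ∈ {0,1}^{2(1+⌈log₂N⌉)×N} be the extended bit testing matrix. Then the Khatri–Rao product W ⊙ B'_N is (K·(1+⌈log₂N⌉), α·(1+⌈log₂N⌉))-coherent. -/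
/-- A binary matrix `W` is `(K, α)`-coherent: it has `{0,1}` entries, every column contains at
least `K` ones, and distinct columns have inner product at most `α`. -/
def Coherent {m N : ℕ} (W : Matrix (Fin m) (Fin N) ℝ) (K : ℕ) (α : ℝ) : Prop :=
  (∀ i j, W i j = 0 ∨ W i j = 1) ∧
  (∀ j, (K : ℝ) ≤ ∑ i, W i j) ∧
  (∀ j l, j ≠ l → ∑ i, W i j * W i l ≤ α)

/-- The bit testing matrix `B_N ∈ {0,1}^{(1+⌈log₂N⌉)×N}`: the `k`-th column (0-based) is a `1`
followed by the binary expansion of `k`. -/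
def bitTest (N : ℕ) : Matrix (Fin (1 + Nat.clog 2 N)) (Fin N) ℝ :=
  fun i k => if (i : ℕ) = 0 then 1 else if Nat.testBit (k : ℕ) ((i : ℕ) - 1) then 1 else 0

/-- The extended bit testing matrix `B'_N ∈ {0,1}^{2(1+⌈log₂N⌉)×N}`, obtained by appending to
each column of `B_N` its binary complement. -/
def bitTestExt (N : ℕ) : Matrix (Fin (2 * (1 + Nat.clog 2 N))) (Fin N) ℝ :=
  fun i k =>
    if h : (i : ℕ) < 1 + Nat.clog 2 N then bitTest N ⟨i, h⟩ k
    else 1 - bitTest N ⟨(i : ℕ) - (1 + Nat.clog 2 N), by have := i.isLt; omega⟩ k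

/-- The Khatri–Rao (columnwise Kronecker) product: `(B ⊙ C)_{qm+r,k} = B_{r,k}·C_{q,k}`. -/
def khatriRao {m p N : ℕ} (B : Matrix (Fin m) (Fin N) ℝ) (C : Matrix (Fin p) (Fin N) ℝ) :
    Matrix (Fin (m * p)) (Fin N) ℝ :=
  fun i k =>
    B ⟨(i : ℕ) % m, Nat.mod_lt _ (Nat.pos_of_ne_zero
        (by rintro rfl; exact absurd i.isLt (by simp)))⟩ k *
    C ⟨(i : ℕ) / m, Nat.div_lt_of_lt_mul i.isLt⟩ k

lemma sum_mod_div {m p : ℕ} (hm : 0 < m) (f : Fin m → ℝ) (g : Fin p → ℝ) :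
    ∑ i : Fin (m * p), f ⟨(i : ℕ) % m, Nat.mod_lt _ hm⟩ *
      g ⟨(i : ℕ) / m, Nat.div_lt_of_lt_mul i.isLt⟩ = (∑ r, f r) * (∑ q, g q) := by
  let e : Fin p × Fin m ≃ Fin (m * p) := finProdFinEquiv.trans (finCongr (mul_comm p m))
  have key : ∀ x : Fin p × Fin m, f x.2 * g x.1
      = f ⟨((e x : Fin (m*p)) : ℕ) % m, Nat.mod_lt _ hm⟩ *
        g ⟨((e x : Fin (m*p)) : ℕ) / m, Nat.div_lt_of_lt_mul (e x).isLt⟩ := by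
    intro x
    have hv : ((e x : Fin (m*p)) : ℕ) = (x.2 : ℕ) + m * (x.1 : ℕ) := by
      simp [e, finProdFinEquiv_apply_val]
    have h1 : ((e x : Fin (m*p)) : ℕ) % m = (x.2 : ℕ) := by
      rw [hv, Nat.add_mul_mod_self_left, Nat.mod_eq_of_lt x.2.isLt]
    have h2 : ((e x : Fin (m*p)) : ℕ) / m = (x.1 : ℕ) := by
      rw [hv, Nat.add_mul_div_left _ _ hm, Nat.div_eq_of_lt x.2.isLt, Nat.zero_add]
    congr 1
    · congr 1; exact Fin.ext h1.symm
    · congr 1; exact Fin.ext h2.symm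
  calc ∑ i : Fin (m * p), f ⟨(i : ℕ) % m, Nat.mod_lt _ hm⟩ *
        g ⟨(i : ℕ) / m, Nat.div_lt_of_lt_mul i.isLt⟩
      = ∑ x : Fin p × Fin m, f x.2 * g x.1 := (Fintype.sum_equiv e _ _ key).symm
    _ = ∑ a : Fin p, ∑ b : Fin m, f b * g a := Fintype.sum_prod_type _
    _ = (∑ r, f r) * (∑ q, g q) := by
        rw [Finset.sum_mul_sum]; exact Finset.sum_comm

lemma bitTest01 (N : ℕ) (i k) : bitTest N i k = 0 ∨ bitTest N i k = 1 := by
  unfold bitTest; split_ifs <;> simp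

lemma bitTestExt01 (N : ℕ) (i k) : bitTestExt N i k = 0 ∨ bitTestExt N i k = 1 := by
  unfold bitTestExt
  split_ifs with h
  · exact bitTest01 N _ k
  · rcases bitTest01 N ⟨(i : ℕ) - (1 + Nat.clog 2 N), by have := i.isLt; omega⟩ k with h' | h' <;>
      rw [h'] <;> simp

lemma bitTestExt_colsum (N : ℕ) (k : Fin N) :
    ∑ i, bitTestExt N i k = ((1 + Nat.clog 2 N : ℕ) : ℝ) := by
  set L := 1 + Nat.clog 2 N with hL
  set f : ℕ → ℝ := fun n => if n = 0 then 1 else if Nat.testBit (k : ℕ) (n - 1) then 1 else 0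
    with hf
  have hext : ∀ x : Fin (2 * L), bitTestExt N x k
      = if (x : ℕ) < L then f (x : ℕ) else 1 - f ((x : ℕ) - L) := by
    intro x; unfold bitTestExt; split_ifs with h <;> rfl
  let e : Fin L ⊕ Fin L ≃ Fin (2 * L) := finSumFinEquiv.trans (finCongr (two_mul L).symm)
  rw [← Fintype.sum_equiv e (fun x => bitTestExt N (e x) k) (fun i => bitTestExt N i k)
      (fun x => rfl)]
  rw [Fintype.sum_sum_type]
  have hval1 : ∀ i : Fin L, ((e (Sum.inl i) : Fin (2*L)) : ℕ) = (i : ℕ) := by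
    intro i; simp [e]
  have hval2 : ∀ i : Fin L, ((e (Sum.inr i) : Fin (2*L)) : ℕ) = L + (i : ℕ) := by
    intro i; simp [e]; omega
  have h1 : ∀ i : Fin L, bitTestExt N (e (Sum.inl i)) k = f (i : ℕ) := by
    intro i; rw [hext, hval1, if_pos i.isLt]
  have h2 : ∀ i : Fin L, bitTestExt N (e (Sum.inr i)) k = 1 - f (i : ℕ) := by
    intro i; rw [hext, hval2, if_neg (by omega), Nat.add_sub_cancel_left]
  simp only [h1, h2]
  rw [← Finset.sum_add_distrib]
  simp [hL]


/-- If `W` is `(K, α)`-coherent then the Khatri–Rao product `W ⊙ B'_N` with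
the extended bit testing matrix is `(K(1+⌈log₂N⌉), α(1+⌈log₂N⌉))`-coherent. -/
theorem stmt_14 {m' N : ℕ} (W : Matrix (Fin m') (Fin N) ℝ) (K α : ℕ)
    (hW : Coherent W K (α : ℝ)) :
    Coherent (khatriRao W (bitTestExt N)) (K * (1 + Nat.clog 2 N))
      ((α : ℝ) * (1 + Nat.clog 2 N)) := by
  obtain ⟨h01, hcol, hinner⟩ := hW
  have hmul : ∀ a b : ℝ, (a = 0 ∨ a = 1) → (b = 0 ∨ b = 1) → (a * b = 0 ∨ a * b = 1) := by
    rintro a b (rfl | rfl) (rfl | rfl) <;> simp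
  refine ⟨?_, ?_, ?_⟩
  · intro i j
    exact hmul _ _ (h01 _ j) (bitTestExt01 N _ j)
  · intro j
    rcases Nat.eq_zero_or_pos m' with hm | hm
    · subst hm
      have h0 : (K : ℝ) ≤ 0 := by simpa using hcol j
      have hK : K = 0 := by exact_mod_cast le_antisymm h0 (Nat.cast_nonneg K)
      haveI : IsEmpty (Fin (0 * (2 * (1 + Nat.clog 2 N)))) :=
        ⟨fun i => absurd i.isLt (by simp)⟩
      rw [Finset.univ_eq_empty, Finset.sum_empty, hK]
      simp
    · have key : ∑ i, khatriRao W (bitTestExt N) i j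
          = (∑ r, W r j) * (∑ q, bitTestExt N q j) :=
        sum_mod_div hm (fun r => W r j) (fun q => bitTestExt N q j)
      rw [key, bitTestExt_colsum]
      push_cast
      have := mul_le_mul_of_nonneg_right (hcol j)
        (by positivity : (0:ℝ) ≤ ((1 + Nat.clog 2 N : ℕ) : ℝ))
      push_cast at this
      linarith
  · intro j l hjl
    rcases Nat.eq_zero_or_pos m' with hm | hm
    · subst hm
      haveI : IsEmpty (Fin (0 * (2 * (1 + Nat.clog 2 N)))) :=
        ⟨fun i => absurd i.isLt (by simp)⟩
      rw [Finset.univ_eq_empty, Finset.sum_empty]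
      positivity
    · have key : ∑ i, khatriRao W (bitTestExt N) i j * khatriRao W (bitTestExt N) i l
          = (∑ r, W r j * W r l) * (∑ q, bitTestExt N q j * bitTestExt N q l) := by
        rw [← sum_mod_div hm (fun r => W r j * W r l)
            (fun q => bitTestExt N q j * bitTestExt N q l)]
        exact Finset.sum_congr rfl fun i _ => mul_mul_mul_comm _ _ _ _
      rw [key]
      have hWnn : 0 ≤ ∑ r, W r j * W r l := Finset.sum_nonneg fun r _ => by
        rcases h01 r j with h | h <;> rcases h01 r l with h' | h' <;> rw [h, h'] <;> norm_num
      have hBnn : 0 ≤ ∑ q, bitTestExt N q j * bitTestExt N q l :=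
        Finset.sum_nonneg fun q _ => by
          rcases bitTestExt01 N q j with h | h <;> rcases bitTestExt01 N q l with h' | h' <;>
            rw [h, h'] <;> norm_num
      have hBle : ∑ q, bitTestExt N q j * bitTestExt N q l ≤ ((1 + Nat.clog 2 N : ℕ) : ℝ) := by
        rw [← bitTestExt_colsum N j]
        refine Finset.sum_le_sum fun q _ => ?_
        rcases bitTestExt01 N q j with h | h <;> rcases bitTestExt01 N q l with h' | h' <;>
          rw [h, h'] <;> norm_num
      calc (∑ r, W r j * W r l) * (∑ q, bitTestExt N q j * bitTestExt N q l)
          ≤ (α : ℝ) * ((1 + Nat.clog 2 N : ℕ) : ℝ) :=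
            mul_le_mul (hinner j l hjl) hBle hBnn (Nat.cast_nonneg α)
        _ = (α : ℝ) * (1 + Nat.clog 2 N) := by push_cast; ring
end
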